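/- Let p₀, p₁, q₀, q₁, r ∈ ℂ and let Ω ⊆ ℂ \ {0} be an open set. Suppose G : Ω → ℂ is differentiable and nowhere zero on Ω, and satisfies, for all t ∈ Ω, the Riccati equation 2t·G'(t) = −(q₁ − t·q₀)·G(t)² + (r·t + 2 − t³)·G(t) + t²·(p₁ + t·p₀). Then the function F(t) := t²/G(−t), defined for t with −t ∈ Ω, satisfies 2t·F'(t) = −(p₁ − t·p₀)·F(t)² + (r·t + 2 − t³)·F(t) + t²·(q₁ + t·q₀) for all such t. -/

import Mathlib

/-- **Proposition 3.3.** If `G` is a nowhere-zero differentiable solution on an open set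
`Ω ⊆ ℂ \ {0}` of the Riccati equation
`2t G' = −(q₁ − tq₀)G² + (rt + 2 − t³)G + t²(p₁ + tp₀)`,
then `F(t) = t²/G(−t)` satisfies
`2t F' = −(p₁ − tp₀)F² + (rt + 2 − t³)F + t²(q₁ + tq₀)`
for every `t` with `−t ∈ Ω`. -/
theorem riccati_reflection_substitution
    (p₀ p₁ q₀ q₁ r : ℂ) (Ω : Set ℂ) (hΩopen : IsOpen Ω) (hΩ : Ω ⊆ {t : ℂ | t ≠ 0})
    (G : ℂ → ℂ)
    (hGdiff : ∀ t ∈ Ω, DifferentiableAt ℂ G t)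
    (hG0 : ∀ t ∈ Ω, G t ≠ 0)
    (hG : ∀ t ∈ Ω, 2 * t * deriv G t =
      -(q₁ - t * q₀) * (G t) ^ 2 + (r * t + 2 - t ^ 3) * G t + t ^ 2 * (p₁ + t * p₀)) :
    ∀ t : ℂ, -t ∈ Ω →
      2 * t * deriv (fun s => s ^ 2 / G (-s)) t =
        -(p₁ - t * p₀) * (t ^ 2 / G (-t)) ^ 2 + (r * t + 2 - t ^ 3) * (t ^ 2 / G (-t))
          + t ^ 2 * (q₁ + t * q₀) := by
  intro t ht
  have ht0 : t ≠ 0 := by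
    have := hΩ ht; simp only [Set.mem_setOf_eq] at this
    intro h; exact this (by simp [h])
  have hGt : G (-t) ≠ 0 := hG0 (-t) ht
  have hcomp : DifferentiableAt ℂ (fun s => G (-s)) t :=
    (hGdiff (-t) ht).comp t (differentiable_neg.differentiableAt)
  have hderivc : deriv (fun s => G (-s)) t = -deriv G (-t) := by
    simpa using deriv_comp_neg G t
  have hdiv : deriv (fun s => s ^ 2 / G (-s)) t =
      (deriv (fun s : ℂ => s ^ 2) t * G (-t) - t ^ 2 * deriv (fun s => G (-s)) t)
        / (G (-t)) ^ 2 := by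
    exact deriv_div (differentiable_pow 2).differentiableAt hcomp hGt
  have hpow : deriv (fun s : ℂ => s ^ 2) t = 2 * t := by
    simp
  have key := hG (-t) ht
  rw [hdiv, hpow, hderivc]
  field_simp
  linear_combination (-1) * key
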